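/- (Integrality of the matroid independent set polytope) Let M be a matroid on a finite ground set U with rank function r, and let P ⊆ ℝ^U be the polytope of all x : U → ℝ with x ≥ 0 and Σ_{e ∈ S} x(e) ≤ r(S) for every S ⊆ U. Then the extreme points of P are exactly the 0/1 indicator vectors of independent sets of M. -/

import Mathlib

set_option linter.unusedSectionVars false
set_option maxHeartbeats 1000000

open scoped Classical

noncomputable def matroidRank {α : Type*} (M : Matroid α) (S : Set α) : ℕ :=
  sSup {n : ℕ | ∃ I ⊆ S, M.Indep I ∧ I.ncard = n}

section Helpers

variable {α : Type*} [Fintype α] {M : Matroid α}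

lemma mrk_bdd (S : Set α) : BddAbove {n : ℕ | ∃ I ⊆ S, M.Indep I ∧ I.ncard = n} := by
  refine ⟨Fintype.card α, ?_⟩
  rintro n ⟨I, hIS, _, rfl⟩
  simpa [Set.ncard_univ] using Set.ncard_le_ncard (Set.subset_univ I) Set.finite_univ

lemma mrk_ne (S : Set α) : Set.Nonempty {n : ℕ | ∃ I ⊆ S, M.Indep I ∧ I.ncard = n} :=
  ⟨0, ∅, Set.empty_subset _, M.empty_indep, by simp⟩

lemma le_mrk {J S : Set α} (hJ : M.Indep J) (hJS : J ⊆ S) : J.ncard ≤ matroidRank M S :=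
  le_csSup (mrk_bdd S) ⟨J, hJS, hJ, rfl⟩

lemma mrk_le_ncard (S : Set α) : matroidRank M S ≤ S.ncard := by
  refine csSup_le (mrk_ne S) ?_
  rintro n ⟨J, hJS, _, rfl⟩
  exact Set.ncard_le_ncard hJS S.toFinite

lemma mrk_eq_of_basis (hE : M.E = Set.univ) {I S : Set α} (hI : M.IsBasis I S) :
    matroidRank M S = I.ncard := by
  refine le_antisymm (csSup_le (mrk_ne S) ?_) (le_mrk hI.indep hI.subset)
  rintro n ⟨J, hJS, hJ, rfl⟩
  obtain ⟨I', hI', hJI'⟩ := Matroid.Indep.subset_isBasis_of_subset hJ hJS (by rw [hE]; exact Set.subset_univ _)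
  calc J.ncard ≤ I'.ncard := Set.ncard_le_ncard hJI' I'.toFinite
    _ = I.ncard := by
        have := hI'.encard_eq_encard hI
        rw [Set.ncard_def, Set.ncard_def, this]


lemma mrk_submod (hE : M.E = Set.univ) (X Y : Set α) :
    matroidRank M (X ∪ Y) + matroidRank M (X ∩ Y) ≤ matroidRank M X + matroidRank M Y := by
  obtain ⟨J, hJ⟩ := M.exists_isBasis (X ∩ Y) (by rw [hE]; exact Set.subset_univ _)
  obtain ⟨I, hIb, hIJ⟩ := hJ.exists_isBasis_inter_eq_of_superset
    (Set.inter_subset_left.trans Set.subset_union_left) (by rw [hE]; exact Set.subset_univ _)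
  rw [mrk_eq_of_basis hE hIb, mrk_eq_of_basis hE hJ]
  have h1 : (I ∩ X).ncard ≤ matroidRank M X :=
    le_mrk (hIb.indep.inter_right X) Set.inter_subset_right
  have h2 : (I ∩ Y).ncard ≤ matroidRank M Y :=
    le_mrk (hIb.indep.inter_right Y) Set.inter_subset_right
  have key : I.ncard + J.ncard = (I ∩ X).ncard + (I ∩ Y).ncard := by
    have hu : (I ∩ X) ∪ (I ∩ Y) = I := by
      rw [← Set.inter_union_distrib_left, Set.inter_eq_left.mpr hIb.subset]
    have hi : (I ∩ X) ∩ (I ∩ Y) = J := by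
      rw [← hIJ]; ext e; simp [Set.mem_inter_iff]; tauto
    have h := Set.ncard_union_add_ncard_inter (I ∩ X) (I ∩ Y)
    rw [hu, hi] at h
    exact h
  omega

lemma hard_dir (M : Matroid α) (hE : M.E = Set.univ) (x : α → ℝ)
    (hx0 : ∀ e, 0 ≤ x e)
    (hxS : ∀ S : Finset α, ∑ e ∈ S, x e ≤ (matroidRank M ↑S : ℝ))
    (hext : ∀ y, ((∀ e, 0 ≤ y e) ∧ ∀ S : Finset α, ∑ e ∈ S, y e ≤ (matroidRank M ↑S : ℝ)) →
      ∀ z, ((∀ e, 0 ≤ z e) ∧ ∀ S : Finset α, ∑ e ∈ S, z e ≤ (matroidRank M ↑S : ℝ)) →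
      x ∈ openSegment ℝ y z → y = x ∧ z = x) :
    ∃ I : Finset α, M.Indep (↑I : Set α) ∧ x = fun e => if e ∈ I then (1 : ℝ) else 0 := by
  have hx1 : ∀ e, x e ≤ 1 := by
    intro e
    have h := hxS {e}
    rw [Finset.sum_singleton] at h
    refine h.trans ?_
    have h2 := mrk_le_ncard (M := M) ({e} : Set α)
    rw [Set.ncard_singleton] at h2
    calc (matroidRank M ↑({e} : Finset α) : ℝ) = (matroidRank M ({e} : Set α) : ℝ) := by norm_cast
      _ ≤ 1 := by exact_mod_cast h2
  set TS : Finset α → Prop := fun S => ∑ e ∈ S, x e = (matroidRank M ↑S : ℝ) with hTS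
  have hstrict : ∀ S : Finset α, ¬ TS S → ∑ e ∈ S, x e < (matroidRank M ↑S : ℝ) :=
    fun S h => lt_of_le_of_ne (hxS S) h
  -- intersection of tight sets is tight
  have tight_inter : ∀ S T : Finset α, TS S → TS T → TS (S ∩ T) := by
    intro S T hS hT
    have hsub := mrk_submod (M := M) hE (↑S : Set α) (↑T : Set α)
    rw [← Finset.coe_union, ← Finset.coe_inter] at hsub
    have hsub' : (matroidRank M ↑(S ∪ T) : ℝ) + (matroidRank M ↑(S ∩ T) : ℝ)
        ≤ (matroidRank M ↑S : ℝ) + (matroidRank M ↑T : ℝ) := by exact_mod_cast hsub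
    have h1 := hxS (S ∪ T)
    have h2 := hxS (S ∩ T)
    have h3 : (∑ e ∈ S ∪ T, x e) + (∑ e ∈ S ∩ T, x e) = (∑ e ∈ S, x e) + (∑ e ∈ T, x e) :=
      Finset.sum_union_inter
    simp only [hTS] at hS hT ⊢
    linarith
  -- slack bound
  obtain ⟨δ, hδpos, hδ⟩ : ∃ δ : ℝ, 0 < δ ∧ ∀ S : Finset α, ¬ TS S →
      δ ≤ (matroidRank M ↑S : ℝ) - ∑ e ∈ S, x e := by
    classical
    set D : Finset (Finset α) := Finset.univ.filter (fun S => ¬ TS S) with hD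
    rcases D.eq_empty_or_nonempty with hDe | hDne
    · rw [hD, Finset.filter_eq_empty_iff] at hDe
      exact ⟨1, one_pos, fun S hS => absurd hS (hDe (Finset.mem_univ S))⟩
    · refine ⟨D.inf' hDne (fun S => (matroidRank M ↑S : ℝ) - ∑ e ∈ S, x e), ?_, ?_⟩
      · rw [Finset.lt_inf'_iff]
        intro S hSD
        rw [hD, Finset.mem_filter] at hSD
        linarith [hstrict S hSD.2]
      · intro S hS
        exact Finset.inf'_le _ (by rw [hD, Finset.mem_filter]; exact ⟨Finset.mem_univ _, hS⟩)
  -- all coordinates are 0 or 1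
  have h01 : ∀ e, x e = 0 ∨ x e = 1 := by
    by_contra hbad
    push_neg at hbad
    obtain ⟨f₀, hf₀0, hf₀1⟩ := hbad
    have hf₀frac : 0 < x f₀ ∧ x f₀ < 1 :=
      ⟨lt_of_le_of_ne (hx0 f₀) (Ne.symm hf₀0), lt_of_le_of_ne (hx1 f₀) hf₀1⟩
    by_cases hfull : ∀ g, (0 < x g ∧ x g < 1) → ∃ S : Finset α, TS S ∧ g ∈ S
    · -- every fractional element is in some tight set
      classical
      set C : Finset (Finset α) :=
        Finset.univ.filter (fun S => TS S ∧ ∃ g ∈ S, 0 < x g ∧ x g < 1) with hC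
      have hCne : C.Nonempty := by
        obtain ⟨S, hS, hfS⟩ := hfull f₀ hf₀frac
        exact ⟨S, by rw [hC, Finset.mem_filter]; exact ⟨Finset.mem_univ _, hS, f₀, hfS, hf₀frac⟩⟩
      obtain ⟨A, hAC, hAmin⟩ := Finset.exists_min_image C Finset.card hCne
      rw [hC, Finset.mem_filter] at hAC
      obtain ⟨-, hAtight, f, hfA, hf0, hf1⟩ := hAC
      -- any tight set containing a fractional element of A contains A
      have hAsub : ∀ h, h ∈ A → 0 < x h → x h < 1 → ∀ S, TS S → h ∈ S → A ⊆ S := by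
        intro h hhA hh0 hh1 S hS hhS
        have hAS : TS (A ∩ S) := tight_inter A S hAtight hS
        have hmemC : A ∩ S ∈ C := by
          rw [hC, Finset.mem_filter]
          exact ⟨Finset.mem_univ _, hAS, h, Finset.mem_inter.mpr ⟨hhA, hhS⟩, hh0, hh1⟩
        have hcard := hAmin _ hmemC
        have heq := Finset.eq_of_subset_of_card_le Finset.inter_subset_left hcard
        intro e he
        rw [← heq] at he
        exact (Finset.mem_inter.mp he).2
      -- find a second fractional element in A
      have hg : ∃ g ∈ A.erase f, ¬(x g = 0 ∨ x g = 1) := by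
        by_contra hcon
        push_neg at hcon
        have hall : ∀ g ∈ A.erase f, x g = 0 ∨ x g = 1 := fun g hg => hcon g hg
        have hs1 : ∑ e ∈ A.erase f, x e
            = (((A.erase f).filter (fun e => x e = 1)).card : ℝ) := by
          calc ∑ e ∈ A.erase f, x e
              = ∑ e ∈ A.erase f, (if x e = 1 then (1:ℝ) else 0) :=
                Finset.sum_congr rfl (fun e he => by
                  rcases hall e he with h0 | h1
                  · rw [h0]; norm_num
                  · rw [h1]; norm_num)
            _ = _ := by rw [Finset.sum_boole]
        have hs2 : x f + ∑ e ∈ A.erase f, x e = ∑ e ∈ A, x e := Finset.add_sum_erase A x hfA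
        simp only [hTS] at hAtight
        set n := ((A.erase f).filter (fun e => x e = 1)).card with hn
        set r := matroidRank M (↑A : Set α) with hr
        have hxf : x f = ((r : ℤ) - (n : ℤ) : ℤ) := by push_cast; linarith
        have hk0 : (0:ℤ) < (r : ℤ) - (n : ℤ) := by
          have : (0:ℝ) < (((r : ℤ) - (n : ℤ) : ℤ) : ℝ) := hxf ▸ hf0
          exact_mod_cast this
        have hk1 : (r : ℤ) - (n : ℤ) < 1 := by
          have : (((r : ℤ) - (n : ℤ) : ℤ) : ℝ) < 1 := hxf ▸ hf1
          exact_mod_cast this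
        omega
      obtain ⟨g, hgAe, hgfrac⟩ := hg
      have hgf : g ≠ f := Finset.ne_of_mem_erase hgAe
      have hgA : g ∈ A := Finset.mem_of_mem_erase hgAe
      push_neg at hgfrac
      have hg0 : 0 < x g := lt_of_le_of_ne (hx0 g) (Ne.symm hgfrac.1)
      have hg1 : x g < 1 := lt_of_le_of_ne (hx1 g) hgfrac.2
      -- the perturbation
      set δ' : ℝ := min δ (min (x f) (x g)) with hδ'
      have hδ'pos : 0 < δ' := lt_min hδpos (lt_min hf0 hg0)
      have hδ'δ : δ' ≤ δ := min_le_left _ _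
      have hδ'f : δ' ≤ x f := le_trans (min_le_right _ _) (min_le_left _ _)
      have hδ'g : δ' ≤ x g := le_trans (min_le_right _ _) (min_le_right _ _)
      have key : ∀ u v : α, u ≠ v → δ' ≤ x v →
          (∀ S : Finset α, TS S → u ∈ S → v ∈ S) →
          ((∀ e, 0 ≤ (fun e => x e + if e = u then δ' else if e = v then -δ' else 0) e) ∧
           ∀ S : Finset α, ∑ e ∈ S, (fun e => x e + if e = u then δ' else if e = v then -δ' else 0) e
             ≤ (matroidRank M ↑S : ℝ)) := by
        intro u v huv hδv himp
        constructor
        · intro e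
          dsimp only
          by_cases heu : e = u
          · subst heu; rw [if_pos rfl]; linarith [hx0 e]
          · rw [if_neg heu]
            by_cases hev : e = v
            · subst hev; rw [if_pos rfl]; linarith
            · rw [if_neg hev]; simpa using hx0 e
        · intro S
          have hsplit : ∑ e ∈ S, (x e + if e = u then δ' else if e = v then -δ' else 0)
              = ∑ e ∈ S, x e + ((if u ∈ S then δ' else 0) + (if v ∈ S then -δ' else 0)) := by
            rw [Finset.sum_add_distrib]
            congr 1
            have heq : ∀ e, (if e = u then δ' else if e = v then -δ' else 0)
                = (if e = u then δ' else 0) + (if e = v then -δ' else 0) := by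
              intro e
              by_cases heu : e = u
              · subst heu
                rw [if_pos rfl, if_pos rfl, if_neg (by exact huv), add_zero]
              · rw [if_neg heu, if_neg heu, zero_add]
            rw [Finset.sum_congr rfl (fun e _ => heq e), Finset.sum_add_distrib,
              Finset.sum_ite_eq' S u (fun _ => δ'), Finset.sum_ite_eq' S v (fun _ => -δ')]
          rw [hsplit]
          by_cases huS : u ∈ S
          · by_cases hvS : v ∈ S
            · simp only [if_pos huS, if_pos hvS]
              have := hxS S
              linarith
            · -- S is not tight
              have hnt : ¬ TS S := fun hts => hvS (himp S hts huS)
              have := hδ S hnt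
              simp only [if_pos huS, if_neg hvS]
              linarith
          · simp only [if_neg huS]
            have := hxS S
            by_cases hvS : v ∈ S
            · simp only [if_pos hvS]; linarith
            · simp only [if_neg hvS]; linarith
      have himp1 : ∀ S : Finset α, TS S → f ∈ S → g ∈ S :=
        fun S hS hfS => hAsub f hfA hf0 hf1 S hS hfS hgA
      have himp2 : ∀ S : Finset α, TS S → g ∈ S → f ∈ S :=
        fun S hS hgS => hAsub g hgA hg0 hg1 S hS hgS hfA
      have hy := key f g (Ne.symm hgf) hδ'g himp1
      have hz := key g f hgf hδ'f himp2
      set y : α → ℝ := fun e => x e + if e = f then δ' else if e = g then -δ' else 0 with hydef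
      set z : α → ℝ := fun e => x e + if e = g then δ' else if e = f then -δ' else 0 with hzdef
      have hcancel : ∀ e, (if e = f then δ' else if e = g then -δ' else 0)
          + (if e = g then δ' else if e = f then -δ' else 0) = 0 := by
        intro e
        by_cases hef : e = f
        · by_cases heg : e = g
          · exact absurd (hef.symm.trans heg) (Ne.symm hgf)
          · subst hef; simp [heg]
        · by_cases heg : e = g
          · subst heg; simp [hef]
          · simp [hef, heg]
      have hmid : x ∈ openSegment ℝ y z := by
        refine ⟨1/2, 1/2, by norm_num, by norm_num, by norm_num, ?_⟩
        funext e
        have hc := hcancel e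
        simp only [Pi.add_apply, Pi.smul_apply, smul_eq_mul, hydef, hzdef]
        linarith
      have := (hext y hy z hz hmid).1
      have hcon := congrFun this f
      rw [hydef] at hcon
      simp at hcon
      linarith
    · -- some fractional element is in no tight set
      push_neg at hfull
      obtain ⟨f, hffrac, hnotight⟩ := hfull
      obtain ⟨hf0, hf1⟩ := hffrac
      set δ' : ℝ := min δ (x f) with hδ'
      have hδ'pos : 0 < δ' := lt_min hδpos hf0
      have hδ'δ : δ' ≤ δ := min_le_left _ _
      have hδ'f : δ' ≤ x f := min_le_right _ _
      have hsplit : ∀ (c : ℝ) (S : Finset α), ∑ e ∈ S, (x e + if e = f then c else 0)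
          = ∑ e ∈ S, x e + (if f ∈ S then c else 0) := by
        intro c S
        rw [Finset.sum_add_distrib, Finset.sum_ite_eq' S f (fun _ => c)]
      have hy : (∀ e, 0 ≤ (fun e => x e + if e = f then δ' else 0) e) ∧
          ∀ S : Finset α, ∑ e ∈ S, (fun e => x e + if e = f then δ' else 0) e
            ≤ (matroidRank M ↑S : ℝ) := by
        constructor
        · intro e; dsimp only; split_ifs
          · linarith [hx0 e]
          · simpa using hx0 e
        · intro S
          rw [hsplit δ' S]
          by_cases hfS : f ∈ S
          · have hnt : ¬ TS S := fun hts => hnotight S hts hfS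
            have := hδ S hnt
            rw [if_pos hfS]
            linarith
          · rw [if_neg hfS]
            simpa using hxS S
      have hz : (∀ e, 0 ≤ (fun e => x e + if e = f then -δ' else 0) e) ∧
          ∀ S : Finset α, ∑ e ∈ S, (fun e => x e + if e = f then -δ' else 0) e
            ≤ (matroidRank M ↑S : ℝ) := by
        constructor
        · intro e; dsimp only
          by_cases hef : e = f
          · subst hef; rw [if_pos rfl]; linarith
          · rw [if_neg hef]; simpa using hx0 e
        · intro S
          rw [hsplit (-δ') S]
          have := hxS S
          split_ifs <;> linarith
      have hmid : x ∈ openSegment ℝ (fun e => x e + if e = f then δ' else 0)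
          (fun e => x e + if e = f then -δ' else 0) := by
        refine ⟨1/2, 1/2, by norm_num, by norm_num, by norm_num, ?_⟩
        funext e
        simp only [Pi.add_apply, Pi.smul_apply, smul_eq_mul]
        split_ifs <;> ring
      have := (hext _ hy _ hz hmid).1
      have hcon := congrFun this f
      simp at hcon
      linarith
  -- conclude
  classical
  refine ⟨Finset.univ.filter (fun e => x e = 1), ?_, ?_⟩
  · set I : Finset α := Finset.univ.filter (fun e => x e = 1) with hI
    have hxI : ∑ e ∈ I, x e = (I.card : ℝ) := by
      rw [Finset.sum_congr rfl (fun e he => (Finset.mem_filter.mp he).2)]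
      simp [hI]
    have hcard : (I.card : ℝ) ≤ (matroidRank M (↑I : Set α) : ℝ) := hxI ▸ hxS I
    have hcard' : I.card ≤ matroidRank M (↑I : Set α) := by exact_mod_cast hcard
    obtain ⟨J, hJ⟩ := M.exists_isBasis (↑I : Set α) (by rw [hE]; exact Set.subset_univ _)
    have hrJ := mrk_eq_of_basis hE hJ
    have hJI : J = (↑I : Set α) := by
      refine Set.eq_of_subset_of_ncard_le hJ.subset ?_ (Set.toFinite _)
      rw [Set.ncard_coe_finset]
      omega
    rw [← hJI]
    exact hJ.indep
  · funext e
    rcases h01 e with h0 | h1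
    · simp [h0, Finset.mem_filter]
    · simp [h1, Finset.mem_filter]


-- easy direction
lemma easy_dir (M : Matroid α) (hE : M.E = Set.univ) (I : Finset α) (hI : M.Indep (↑I : Set α)) :
    (fun e => if e ∈ I then (1:ℝ) else 0) ∈ Set.extremePoints ℝ
      {x : α → ℝ |
        (∀ e, 0 ≤ x e) ∧
        ∀ S : Finset α, ∑ e ∈ S, x e ≤ (matroidRank M ↑S : ℝ)} := by
  set x : α → ℝ := fun e => if e ∈ I then (1:ℝ) else 0 with hxdef
  have hsum : ∀ S : Finset α, ∑ e ∈ S, x e = ((S ∩ I).card : ℝ) := by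
    intro S
    rw [hxdef]
    simp [Finset.sum_boole, Finset.filter_mem_eq_inter]
  have hmem : x ∈ {x : α → ℝ |
        (∀ e, 0 ≤ x e) ∧
        ∀ S : Finset α, ∑ e ∈ S, x e ≤ (matroidRank M ↑S : ℝ)} := by
    constructor
    · intro e; rw [hxdef]; dsimp only; split <;> norm_num
    · intro S
      rw [hsum S]
      have h1 : ((S ∩ I : Finset α) : Set α).ncard ≤ matroidRank M ↑S := by
        refine le_mrk (hI.subset ?_) ?_
        · intro e he; simp at he ⊢; exact he.2
        · intro e he; simp at he ⊢; exact he.1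
      rw [Set.ncard_coe_finset] at h1
      exact_mod_cast h1
  rw [mem_extremePoints]
  refine ⟨hmem, ?_⟩
  rintro y ⟨hy0, hyS⟩ z ⟨hz0, hzS⟩ ⟨a, b, ha, hb, hab, hxyz⟩
  have hcoord : ∀ e, a * y e + b * z e = x e := fun e => congrFun hxyz e
  -- any point of P has coordinates ≤ 1
  have hle1 : ∀ (w : α → ℝ), (∀ S : Finset α, ∑ e ∈ S, w e ≤ (matroidRank M ↑S : ℝ)) →
      ∀ e, w e ≤ 1 := by
    intro w hw e
    have := hw {e}
    rw [Finset.sum_singleton] at this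
    refine this.trans ?_
    have := mrk_le_ncard (M := M) ({e} : Set α)
    rw [Set.ncard_singleton] at this
    calc (matroidRank M ↑({e} : Finset α) : ℝ) = (matroidRank M ({e} : Set α) : ℝ) := by
          norm_cast
      _ ≤ 1 := by exact_mod_cast this
  have hy1 := hle1 y hyS
  have hz1 := hle1 z hzS
  -- rank of I is card I
  have hrI : (matroidRank M (↑I : Set α) : ℝ) = (I.card : ℝ) := by
    rw [mrk_eq_of_basis hE (Matroid.Indep.isBasis_self hI), Set.ncard_coe_finset]
  have hxI : ∑ e ∈ I, x e = (I.card : ℝ) := by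
    rw [hsum I, Finset.inter_self]
  have hsy : ∑ e ∈ I, y e ≤ (I.card : ℝ) := (hyS I).trans (le_of_eq hrI)
  have hsz : ∑ e ∈ I, z e ≤ (I.card : ℝ) := (hzS I).trans (le_of_eq hrI)
  have hcomb : a * (∑ e ∈ I, y e) + b * (∑ e ∈ I, z e) = (I.card : ℝ) := by
    rw [← hxI, Finset.mul_sum, Finset.mul_sum, ← Finset.sum_add_distrib]
    exact Finset.sum_congr rfl fun e _ => hcoord e
  have hysum : ∑ e ∈ I, y e = (I.card : ℝ) := by nlinarith
  have hyI : ∀ e ∈ I, y e = 1 := by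
    intro e he
    by_contra hne
    have hlt : y e < 1 := lt_of_le_of_ne (hy1 e) hne
    have : ∑ e ∈ I, y e < ∑ _e ∈ I, (1:ℝ) :=
      Finset.sum_lt_sum (fun i _ => hy1 i) ⟨e, he, hlt⟩
    rw [Finset.sum_const, nsmul_eq_mul, mul_one, hysum] at this
    exact lt_irrefl _ this
  have hy : y = x := by
    funext e
    by_cases he : e ∈ I
    · rw [hyI e he, hxdef]; simp [he]
    · have h0 : x e = 0 := by rw [hxdef]; simp [he]
      have := hcoord e
      rw [h0] at this
      nlinarith [hy0 e, hz0 e]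
  refine ⟨hy, ?_⟩
  funext e
  have h := hcoord e
  rw [hy] at h
  have hbz : b * z e = b * x e := by linear_combination h - x e * hab
  exact mul_left_cancel₀ (ne_of_gt hb) hbz

end Helpers

theorem matroid_polytope_integral
    {α : Type*} [Fintype α] (M : Matroid α) (hE : M.E = Set.univ) :
    Set.extremePoints ℝ
      {x : α → ℝ |
        (∀ e, 0 ≤ x e) ∧
        ∀ S : Finset α, ∑ e ∈ S, x e ≤ (matroidRank M ↑S : ℝ)}
    =
    {x : α → ℝ | ∃ I : Finset α, M.Indep (↑I : Set α) ∧
      x = fun e => if e ∈ I then (1 : ℝ) else 0} := by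
  ext x
  constructor
  · intro hx
    rw [mem_extremePoints] at hx
    obtain ⟨⟨hx0, hxS⟩, hext⟩ := hx
    exact hard_dir M hE x hx0 hxS hext
  · rintro ⟨I, hI, rfl⟩
    exact easy_dir M hE I hI
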